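/- Let w¹, w² ∈ R^d be two models with ‖w¹ − w²‖_2 ≤ τ, let y ∈ R^n be any response vector, and for j = 1, 2 let s^j be the M-truncated weight vectors they induce, s^j_i = min(M, 1/|⟨w^j, x_i⟩ − y_i|), with S^j = diag(s^j). Then for any covariate matrix X = [x_1,...,x_n] ∈ R^{d×n} with ‖x_i‖_2 ≤ R_X for all i, it holds deterministically that |λ_min(X S¹ X^T) − λ_min(X S² X^T)| ≤ 2nτM²R_X³, and moreover ‖X S¹ X^T − X S² X^T‖_2 ≤ 2nτM²R_X³. -/

import Mathlib

open MeasureTheory ProbabilityTheory Matrix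

/-- Euclidean norm of a vector in `Fin k → ℝ`. -/
noncomputable def euclNorm {k : ℕ} (v : Fin k → ℝ) : ℝ := Real.sqrt (∑ j, v j ^ 2)

/-- The `M`-truncated IRLS weight for a residual `r`, i.e. `min (1/|r|) M`,
interpreted as `M` when the residual is zero. -/
noncomputable def trWeight (M r : ℝ) : ℝ := if r = 0 then M else min (1 / |r|) M

/-- Smallest eigenvalue of a symmetric matrix, via the Rayleigh quotient. -/
noncomputable def lamMin {k : ℕ} (A : Matrix (Fin k) (Fin k) ℝ) : ℝ :=
  sInf {r : ℝ | ∃ v : Fin k → ℝ, euclNorm v = 1 ∧ r = v ⬝ᵥ A.mulVec v}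

/-- Largest eigenvalue of a symmetric matrix, via the Rayleigh quotient. -/
noncomputable def lamMax {k : ℕ} (A : Matrix (Fin k) (Fin k) ℝ) : ℝ :=
  sSup {r : ℝ | ∃ v : Fin k → ℝ, euclNorm v = 1 ∧ r = v ⬝ᵥ A.mulVec v}

/-- Operator (spectral) norm of a `d × n` real matrix. -/
noncomputable def opNorm2 {d n : ℕ} (X : Matrix (Fin d) (Fin n) ℝ) : ℝ :=
  Real.sqrt (lamMax (X * Xᵀ))

/-- Covariate matrix whose `i`-th column is the sample point `s i`. -/
def Xmat {d n : ℕ} (s : Fin n → Fin d → ℝ) : Matrix (Fin d) (Fin n) ℝ :=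
  Matrix.of fun j i => s i j

/-- `X_G`: the matrix agreeing with `X` on columns in `G` and zero elsewhere. -/
def restrictCols {d n : ℕ} (X : Matrix (Fin d) (Fin n) ℝ) (G : Finset (Fin n)) :
    Matrix (Fin d) (Fin n) ℝ :=
  Matrix.of fun j i => if i ∈ G then X j i else 0

/-- The `M`-truncated weights assigned by model `w` on data `(X, y)`. -/
noncomputable def stirWeights {d n : ℕ} (X : Matrix (Fin d) (Fin n) ℝ) (y : Fin n → ℝ)
    (M : ℝ) (w : Fin d → ℝ) : Fin n → ℝ :=
  fun i => trWeight M ((Xᵀ.mulVec w - y) i)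

/-- One step of (M-truncated) IRLS: weighted least squares with the current weights. -/
noncomputable def stirStep {d n : ℕ} (X : Matrix (Fin d) (Fin n) ℝ) (y : Fin n → ℝ)
    (M : ℝ) (w : Fin d → ℝ) : Fin d → ℝ :=
  (X * Matrix.diagonal (stirWeights X y M w) * Xᵀ)⁻¹.mulVec
    (X.mulVec fun i => stirWeights X y M w i * y i)

/-- One step of STIR-GD with step length `C`: `w - (2C/(Mn)) • X S r`. -/
noncomputable def stirGDStep {d n : ℕ} (X : Matrix (Fin d) (Fin n) ℝ) (y : Fin n → ℝ)
    (C M : ℝ) (w : Fin d → ℝ) : Fin d → ℝ :=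
  w - (2 * C / (M * n)) • X.mulVec (fun i => stirWeights X y M w i * (Xᵀ.mulVec w - y) i)

/-- An execution trace of a stagewise truncated algorithm (STIR / STIR-GD):
`wStage T` is the model at the start of stage `T`, within stage `T` the truncation
level is `η^T * M₁`, the inner loop applies `step`, and the stage ends the first time
successive iterates are within `2/(η * (η^T * M₁))` of each other. -/
def IsSTIRTrace {d : ℕ} (step : ℝ → (Fin d → ℝ) → (Fin d → ℝ))
    (M₁ η : ℝ) (w0 : Fin d → ℝ) (wStage : ℕ → Fin d → ℝ) (stageLen : ℕ → ℕ) : Prop :=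
  wStage 0 = w0 ∧
  ∃ wIter : ℕ → ℕ → Fin d → ℝ,
    (∀ T, wIter T 0 = wStage T) ∧
    (∀ T t, wIter T (t + 1) = step (η ^ T * M₁) (wIter T t)) ∧
    (∀ T, euclNorm (wIter T (stageLen T + 1) - wIter T (stageLen T)) ≤
      2 / (η * (η ^ T * M₁))) ∧
    (∀ T t, t < stageLen T →
      2 / (η * (η ^ T * M₁)) < euclNorm (wIter T (t + 1) - wIter T t)) ∧
    (∀ T, wStage (T + 1) = wIter T (stageLen T + 1))

/-- A real random variable `Z` is `R`-sub-Gaussian (ψ₂-norm at most `R`). -/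
def IsSubGaussianRV {Ω : Type*} [MeasurableSpace Ω] (μ : Measure Ω) (Z : Ω → ℝ) (R : ℝ) : Prop :=
  ∀ p : ℝ, 1 ≤ p → (∫ ω, |Z ω| ^ p ∂μ) ^ (1 / p) ≤ R * Real.sqrt p

/-- A distribution on `ℝ^d` is `R`-sub-Gaussian if all its one-dimensional marginals are. -/
def IsSubGaussianVec {d : ℕ} (D : Measure (Fin d → ℝ)) (R : ℝ) : Prop :=
  ∀ v : Fin d → ℝ, euclNorm v = 1 → IsSubGaussianRV D (fun x => v ⬝ᵥ x) R

/-- A distribution on `ℝ^d` is isotropic if `E ⟨v, x⟩² = 1` for every unit `v`. -/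
def IsIsotropic {d : ℕ} (D : Measure (Fin d → ℝ)) : Prop :=
  ∀ v : Fin d → ℝ, euclNorm v = 1 → ∫ x, (v ⬝ᵥ x) ^ 2 ∂D = 1

/-- The weighted strong convexity constant
`c = inf_{u,v unit} E_{x~D} [ min(1/|⟨u,x⟩|, 1) ⟨x,v⟩² ]`. -/
noncomputable def cWSC {d : ℕ} (D : Measure (Fin d → ℝ)) : ℝ :=
  ⨅ p : {q : (Fin d → ℝ) × (Fin d → ℝ) // euclNorm q.1 = 1 ∧ euclNorm q.2 = 1},
    ∫ x, trWeight 1 (p.1.1 ⬝ᵥ x) * (p.1.2 ⬝ᵥ x) ^ 2 ∂D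

/-- The weighted strong convexity constant in the presence of dense noise:
`c_ε = inf_{0 ≤ r ≤ 1/M, u,v unit} E [ min(1/|Mr⟨u,x⟩ - Mε|, 1) ⟨x,v⟩² ]`. -/
noncomputable def cWSCnoise {d : ℕ} (D : Measure (Fin d → ℝ)) (Dε : Measure ℝ) [SFinite Dε]
    (M : ℝ) : ℝ :=
  ⨅ p : {q : ℝ × (Fin d → ℝ) × (Fin d → ℝ) //
      0 ≤ q.1 ∧ q.1 ≤ 1 / M ∧ euclNorm q.2.1 = 1 ∧ euclNorm q.2.2 = 1},
    ∫ z : (Fin d → ℝ) × ℝ,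
      trWeight 1 (M * p.1.1 * (p.1.2.1 ⬝ᵥ z.1) - M * z.2) * (p.1.2.2 ⬝ᵥ z.1) ^ 2 ∂(D.prod Dε)

/-- The weighted Gram matrix `X_G S_G X_Gᵀ` induced by the sample `s`, the clean responses
`y_i = ⟨w*, x_i⟩`, the truncation level `M` and the model `w`. -/
noncomputable def gramG {d n : ℕ} (s : Fin n → Fin d → ℝ) (G : Finset (Fin n))
    (wstar : Fin d → ℝ) (M : ℝ) (w : Fin d → ℝ) : Matrix (Fin d) (Fin d) ℝ :=
  restrictCols (Xmat s) G *
    Matrix.diagonal (fun i => if i ∈ G then trWeight M (s i ⬝ᵥ (w - wstar)) else 0) *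
    (restrictCols (Xmat s) G)ᵀ

/-- The weighted Gram matrix `X_G S_G X_Gᵀ` in the dense-noise setting, where the responses
on good points are `y_i = ⟨w*, x_i⟩ + e_i`. -/
noncomputable def gramGnoisy {d n : ℕ} (s : Fin n → Fin d → ℝ) (e : Fin n → ℝ)
    (G : Finset (Fin n)) (wstar : Fin d → ℝ) (M : ℝ) (w : Fin d → ℝ) :
    Matrix (Fin d) (Fin d) ℝ :=
  restrictCols (Xmat s) G *
    Matrix.diagonal (fun i => if i ∈ G then trWeight M (s i ⬝ᵥ (w - wstar) - e i) else 0) *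
    (restrictCols (Xmat s) G)ᵀ

/-- The scaled Huber loss `f_ε`. -/
noncomputable def huberS (ε x : ℝ) : ℝ := if |x| ≤ ε then (x ^ 2 / ε + ε) / 2 else |x|

/-- The majorizer `g_ε(x; a)` of the scaled Huber loss. -/
noncomputable def huberMaj (ε x a : ℝ) : ℝ := (x ^ 2 / max |a| ε + max |a| ε) / 2

/-- The scaled-Huber objective `ℓ_ε(w) = (1/n) ∑ᵢ f_ε(⟨w, xᵢ⟩ - yᵢ)`. -/
noncomputable def huberObj {d n : ℕ} (X : Matrix (Fin d) (Fin n) ℝ) (y : Fin n → ℝ)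
    (ε : ℝ) (w : Fin d → ℝ) : ℝ :=
  (1 / (n : ℝ)) * ∑ i, huberS ε ((Xᵀ.mulVec w - y) i)

lemma euclNorm_nonneg {k : ℕ} (v : Fin k → ℝ) : 0 ≤ euclNorm v := Real.sqrt_nonneg _

lemma euclNorm_sq {k : ℕ} (v : Fin k → ℝ) : euclNorm v ^ 2 = ∑ j, v j ^ 2 :=
  Real.sq_sqrt (Finset.sum_nonneg fun j _ => sq_nonneg _)

lemma abs_dot_le {k : ℕ} (a b : Fin k → ℝ) : |a ⬝ᵥ b| ≤ euclNorm a * euclNorm b := by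
  have h := Finset.sum_mul_sq_le_sq_mul_sq Finset.univ a b
  have h2 : (a ⬝ᵥ b) ^ 2 ≤ (euclNorm a * euclNorm b) ^ 2 := by
    rw [mul_pow, euclNorm_sq, euclNorm_sq]
    simpa [dotProduct] using h
  have hnn : 0 ≤ euclNorm a * euclNorm b := mul_nonneg (euclNorm_nonneg a) (euclNorm_nonneg b)
  nlinarith [sq_abs (a ⬝ᵥ b), abs_nonneg (a ⬝ᵥ b)]

lemma trWeight_eq {M : ℝ} (hM : 0 < M) (r : ℝ) : trWeight M r = M / max 1 (M * |r|) := by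
  unfold trWeight
  split_ifs with h
  · simp [h]
  · have hr : 0 < |r| := abs_pos.mpr h
    rcases le_total (M * |r|) 1 with hle | hle
    · rw [max_eq_left hle, div_one, min_eq_right]
      rw [le_div_iff₀ hr]
      linarith [hle]
    · rw [max_eq_right hle, min_eq_left]
      · field_simp
      · rw [div_le_iff₀ hr]
        nlinarith
lemma trWeight_nonneg {M : ℝ} (hM : 0 < M) (r : ℝ) : 0 ≤ trWeight M r := by
  rw [trWeight_eq hM]
  positivity
lemma trWeight_le {M : ℝ} (hM : 0 < M) (r : ℝ) : trWeight M r ≤ M := by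
  rw [trWeight_eq hM]
  rw [div_le_iff₀ (lt_of_lt_of_le one_pos (le_max_left _ _))]
  nlinarith [le_max_left 1 (M * |r|)]

lemma trWeight_lip {M : ℝ} (hM : 0 < M) (a b : ℝ) :
    |trWeight M a - trWeight M b| ≤ M ^ 2 * |a - b| := by
  rw [trWeight_eq hM, trWeight_eq hM]
  set p := max 1 (M * |a|) with hp
  set q := max 1 (M * |b|) with hq
  have hp1 : (1:ℝ) ≤ p := le_max_left _ _
  have hq1 : (1:ℝ) ≤ q := le_max_left _ _
  have hpq : |p - q| ≤ M * |a - b| := by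
    calc |p - q| ≤ abs (M * |a| - M * |b|) := by
          simpa [hp, hq, max_comm] using abs_max_sub_max_le_abs (M * |a|) (M * |b|) 1
      _ = M * abs (|a| - |b|) := by rw [← mul_sub, abs_mul, abs_of_pos hM]
      _ ≤ M * |a - b| := by
          exact mul_le_mul_of_nonneg_left (abs_abs_sub_abs_le_abs_sub a b) hM.le
  have heq : M / p - M / q = M * (q - p) / (p * q) := by
    field_simp
  rw [heq, abs_div, abs_mul, abs_of_pos hM]
  rw [div_le_iff₀ (by positivity : (0:ℝ) < |p * q|)]
  have h1 : (1:ℝ) ≤ |p * q| := by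
    rw [abs_of_pos (by nlinarith : (0:ℝ) < p * q)]; nlinarith
  have h2 : |q - p| ≤ M * |a - b| := by rwa [abs_sub_comm]
  calc M * |q - p| ≤ M * (M * |a - b|) := mul_le_mul_of_nonneg_left h2 hM.le
    _ = M ^ 2 * |a - b| * 1 := by ring
    _ ≤ M ^ 2 * |a - b| * |p * q| := by
        exact mul_le_mul_of_nonneg_left h1 (by positivity)

lemma quadForm {d n : ℕ} (X : Matrix (Fin d) (Fin n) ℝ) (s : Fin n → ℝ) (a b : Fin d → ℝ) :
    a ⬝ᵥ (X * Matrix.diagonal s * Xᵀ).mulVec b =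
      ∑ i, s i * ((fun j => X j i) ⬝ᵥ a) * ((fun j => X j i) ⬝ᵥ b) := by
  rw [← Matrix.mulVec_mulVec, ← Matrix.mulVec_mulVec, Matrix.dotProduct_mulVec]
  simp only [dotProduct, Matrix.vecMul, Matrix.mulVec, Matrix.transpose_apply,
    dotProduct, Matrix.diagonal_apply, ite_mul, zero_mul, Finset.sum_ite_eq,
    Finset.mem_univ, if_true]
  refine Finset.sum_congr rfl fun i _ => ?_
  have h1 : (∑ j, a j * X j i) = ∑ j, X j i * a j :=
    Finset.sum_congr rfl fun j _ => mul_comm _ _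
  rw [h1]
  ring


/-- **Lemma (approximation bound for weighted Gram matrices).**
If `‖w¹ - w²‖ ≤ τ` and all covariates have norm at most `R_X`, then the smallest
eigenvalues of the weighted Gram matrices `X S¹ Xᵀ` and `X S² Xᵀ` induced by the two
models differ by at most `2 n τ M² R_X³`, and moreover
`‖X S¹ Xᵀ - X S² Xᵀ‖₂ ≤ 2 n τ M² R_X³`. -/
theorem irls_gram_approximation
    {d n : ℕ} (X : Matrix (Fin d) (Fin n) ℝ) (y : Fin n → ℝ)
    (w1 w2 : Fin d → ℝ) (τ M RX : ℝ) (hM : 0 < M)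
    (hw : euclNorm (w1 - w2) ≤ τ)
    (hX : ∀ i, euclNorm (fun j => X j i) ≤ RX) :
    |lamMin (X * Matrix.diagonal (stirWeights X y M w1) * Xᵀ) -
        lamMin (X * Matrix.diagonal (stirWeights X y M w2) * Xᵀ)| ≤
      2 * n * τ * M ^ 2 * RX ^ 3 ∧
    opNorm2 (X * Matrix.diagonal (stirWeights X y M w1) * Xᵀ -
        X * Matrix.diagonal (stirWeights X y M w2) * Xᵀ) ≤
      2 * n * τ * M ^ 2 * RX ^ 3 := by
  have hτ : 0 ≤ τ := le_trans (euclNorm_nonneg _) hw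
  set s1 := stirWeights X y M w1 with hs1
  set s2 := stirWeights X y M w2 with hs2
  set A1 := X * Matrix.diagonal s1 * Xᵀ with hA1
  set A2 := X * Matrix.diagonal s2 * Xᵀ with hA2
  set B : ℝ := (n : ℝ) * τ * M ^ 2 * RX ^ 3 with hBdef
  have hB : 0 ≤ B := by
    rcases Nat.eq_zero_or_pos n with hn | hn
    · simp [hBdef, hn]
    · have hRX : 0 ≤ RX := le_trans (euclNorm_nonneg _) (hX ⟨0, hn⟩)
      have : (0:ℝ) ≤ (n : ℝ) := Nat.cast_nonneg n
      positivity
  -- weight difference bound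
  have hδ : ∀ i, |s1 i - s2 i| ≤ M ^ 2 * (RX * τ) := by
    intro i
    have hRXi : 0 ≤ RX := le_trans (euclNorm_nonneg _) (hX i)
    have hres : (Xᵀ.mulVec w1 - y) i - (Xᵀ.mulVec w2 - y) i
        = (fun j => X j i) ⬝ᵥ (w1 - w2) := by
      simp only [Pi.sub_apply, Matrix.mulVec, dotProduct, Matrix.transpose_apply,
        mul_sub, Finset.sum_sub_distrib]
      ring
    have habs : |(fun j => X j i) ⬝ᵥ (w1 - w2)| ≤ RX * τ :=
      le_trans (abs_dot_le _ _) (mul_le_mul (hX i) hw (euclNorm_nonneg _) hRXi)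
    calc |s1 i - s2 i|
        ≤ M ^ 2 * |(Xᵀ.mulVec w1 - y) i - (Xᵀ.mulVec w2 - y) i| := by
          simpa [hs1, hs2, stirWeights] using
            trWeight_lip hM ((Xᵀ.mulVec w1 - y) i) ((Xᵀ.mulVec w2 - y) i)
      _ = M ^ 2 * |(fun j => X j i) ⬝ᵥ (w1 - w2)| := by rw [hres]
      _ ≤ M ^ 2 * (RX * τ) := mul_le_mul_of_nonneg_left habs (sq_nonneg M)
  -- main bilinear estimate
  have hmain : ∀ a b : Fin d → ℝ,
      |a ⬝ᵥ A1.mulVec b - a ⬝ᵥ A2.mulVec b| ≤ B * (euclNorm a * euclNorm b) := by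
    intro a b
    rw [hA1, hA2, quadForm, quadForm, ← Finset.sum_sub_distrib]
    have hterm : ∀ i : Fin n,
        |s1 i * ((fun j => X j i) ⬝ᵥ a) * ((fun j => X j i) ⬝ᵥ b) -
          s2 i * ((fun j => X j i) ⬝ᵥ a) * ((fun j => X j i) ⬝ᵥ b)|
        ≤ τ * M ^ 2 * RX ^ 3 * (euclNorm a * euclNorm b) := by
      intro i
      have hRXi : 0 ≤ RX := le_trans (euclNorm_nonneg _) (hX i)
      set ca := (fun j => X j i) ⬝ᵥ a
      set cb := (fun j => X j i) ⬝ᵥ b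
      have e2 : |ca| ≤ RX * euclNorm a :=
        le_trans (abs_dot_le _ _)
          (mul_le_mul_of_nonneg_right (hX i) (euclNorm_nonneg _))
      have e3 : |cb| ≤ RX * euclNorm b :=
        le_trans (abs_dot_le _ _)
          (mul_le_mul_of_nonneg_right (hX i) (euclNorm_nonneg _))
      have hfac : s1 i * ca * cb - s2 i * ca * cb = (s1 i - s2 i) * ca * cb := by ring
      rw [hfac, abs_mul, abs_mul]
      have h1 : |s1 i - s2 i| * |ca| ≤ (M ^ 2 * (RX * τ)) * (RX * euclNorm a) :=
        mul_le_mul (hδ i) e2 (abs_nonneg _)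
          (mul_nonneg (sq_nonneg M) (mul_nonneg hRXi hτ))
      have h2 : |s1 i - s2 i| * |ca| * |cb|
          ≤ (M ^ 2 * (RX * τ)) * (RX * euclNorm a) * (RX * euclNorm b) :=
        mul_le_mul h1 e3 (abs_nonneg _)
          (mul_nonneg (mul_nonneg (sq_nonneg M) (mul_nonneg hRXi hτ))
            (mul_nonneg hRXi (euclNorm_nonneg a)))
      calc |s1 i - s2 i| * |ca| * |cb|
          ≤ (M ^ 2 * (RX * τ)) * (RX * euclNorm a) * (RX * euclNorm b) := h2
        _ = τ * M ^ 2 * RX ^ 3 * (euclNorm a * euclNorm b) := by ring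
    calc |∑ i, (s1 i * ((fun j => X j i) ⬝ᵥ a) * ((fun j => X j i) ⬝ᵥ b) -
            s2 i * ((fun j => X j i) ⬝ᵥ a) * ((fun j => X j i) ⬝ᵥ b))|
        ≤ ∑ i, |s1 i * ((fun j => X j i) ⬝ᵥ a) * ((fun j => X j i) ⬝ᵥ b) -
            s2 i * ((fun j => X j i) ⬝ᵥ a) * ((fun j => X j i) ⬝ᵥ b)| :=
          Finset.abs_sum_le_sum_abs _ _
      _ ≤ ∑ _i : Fin n, τ * M ^ 2 * RX ^ 3 * (euclNorm a * euclNorm b) :=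
          Finset.sum_le_sum fun i _ => hterm i
      _ = B * (euclNorm a * euclNorm b) := by
          simp [Finset.sum_const, Finset.card_univ, hBdef]
          ring
  -- nonnegativity of Rayleigh quotients
  have hnonneg : ∀ (s : Fin n → ℝ), (∀ i, 0 ≤ s i) → ∀ v : Fin d → ℝ,
      0 ≤ v ⬝ᵥ (X * Matrix.diagonal s * Xᵀ).mulVec v := by
    intro s hs v
    rw [quadForm]
    refine Finset.sum_nonneg fun i _ => ?_
    have : s i * ((fun j => X j i) ⬝ᵥ v) * ((fun j => X j i) ⬝ᵥ v)
        = s i * ((fun j => X j i) ⬝ᵥ v) ^ 2 := by ring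
    rw [this]
    exact mul_nonneg (hs i) (sq_nonneg _)
  have hs1n : ∀ i, 0 ≤ s1 i := fun i => trWeight_nonneg hM _
  have hs2n : ∀ i, 0 ≤ s2 i := fun i => trWeight_nonneg hM _
  constructor
  · -- lamMin part
    show |lamMin A1 - lamMin A2| ≤ 2 * n * τ * M ^ 2 * RX ^ 3
    by_cases hex : ∃ v : Fin d → ℝ, euclNorm v = 1
    · obtain ⟨v0, hv0⟩ := hex
      unfold lamMin
      set S1 := {r : ℝ | ∃ v : Fin d → ℝ, euclNorm v = 1 ∧ r = v ⬝ᵥ A1.mulVec v} with hS1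
      set S2 := {r : ℝ | ∃ v : Fin d → ℝ, euclNorm v = 1 ∧ r = v ⬝ᵥ A2.mulVec v} with hS2
      have hbdd1 : BddBelow S1 := ⟨0, by rintro r ⟨v, hv, rfl⟩; exact hnonneg s1 hs1n v⟩
      have hbdd2 : BddBelow S2 := ⟨0, by rintro r ⟨v, hv, rfl⟩; exact hnonneg s2 hs2n v⟩
      have hne1 : S1.Nonempty := ⟨_, v0, hv0, rfl⟩
      have hne2 : S2.Nonempty := ⟨_, v0, hv0, rfl⟩
      have key : ∀ v : Fin d → ℝ, euclNorm v = 1 →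
          |v ⬝ᵥ A1.mulVec v - v ⬝ᵥ A2.mulVec v| ≤ B := by
        intro v hv
        have := hmain v v
        rw [hv] at this
        simpa using this
      have h12 : sInf S2 - B ≤ sInf S1 := by
        refine le_csInf hne1 ?_
        rintro r ⟨v, hv, rfl⟩
        have h1 : sInf S2 ≤ v ⬝ᵥ A2.mulVec v := csInf_le hbdd2 ⟨v, hv, rfl⟩
        have h2 := (abs_le.mp (key v hv)).1
        linarith
      have h21 : sInf S1 - B ≤ sInf S2 := by
        refine le_csInf hne2 ?_
        rintro r ⟨v, hv, rfl⟩
        have h1 : sInf S1 ≤ v ⬝ᵥ A1.mulVec v := csInf_le hbdd1 ⟨v, hv, rfl⟩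
        have h2 := (abs_le.mp (key v hv)).2
        linarith
      rw [abs_le]
      constructor <;> [linarith [hB]; linarith [hB]]
    · have h1 : {r : ℝ | ∃ v : Fin d → ℝ, euclNorm v = 1 ∧ r = v ⬝ᵥ A1.mulVec v} = ∅ := by
        ext r
        simp only [Set.mem_setOf_eq, Set.mem_empty_iff_false, iff_false, not_exists]
        intro v hv
        exact absurd ⟨v, hv.1⟩ hex
      have h2 : {r : ℝ | ∃ v : Fin d → ℝ, euclNorm v = 1 ∧ r = v ⬝ᵥ A2.mulVec v} = ∅ := by
        ext r
        simp only [Set.mem_setOf_eq, Set.mem_empty_iff_false, iff_false, not_exists]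
        intro v hv
        exact absurd ⟨v, hv.1⟩ hex
      unfold lamMin
      rw [h1, h2, Real.sInf_empty]
      simpa using by linarith [hB]
  · -- opNorm2 part
    show opNorm2 (A1 - A2) ≤ 2 * n * τ * M ^ 2 * RX ^ 3
    have hΔT : (A1 - A2)ᵀ = A1 - A2 := by
      rw [Matrix.transpose_sub, hA1, hA2]
      simp [Matrix.transpose_mul, Matrix.transpose_transpose, Matrix.diagonal_transpose,
        Matrix.mul_assoc]
    have hquad : ∀ v : Fin d → ℝ, euclNorm v = 1 →
        v ⬝ᵥ ((A1 - A2) * (A1 - A2)ᵀ).mulVec v ≤ B ^ 2 := by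
      intro v hv
      have h1 : v ⬝ᵥ ((A1 - A2) * (A1 - A2)ᵀ).mulVec v
          = ((A1 - A2).mulVec v) ⬝ᵥ ((A1 - A2).mulVec v) := by
        rw [hΔT, ← Matrix.mulVec_mulVec, Matrix.dotProduct_mulVec]
        congr 1
        rw [← hΔT, Matrix.vecMul_transpose, hΔT]
      set u := (A1 - A2).mulVec v with hu
      have h2 : u ⬝ᵥ u = euclNorm u ^ 2 := by
        rw [euclNorm_sq]
        simp [dotProduct, sq]
      have h3 : u ⬝ᵥ u ≤ B * euclNorm u := by
        have hsplit : u ⬝ᵥ u = u ⬝ᵥ A1.mulVec v - u ⬝ᵥ A2.mulVec v := by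
          rw [hu, Matrix.sub_mulVec, dotProduct_sub]
        rw [hsplit]
        have := hmain u v
        rw [hv, mul_one] at this
        have h4 := (abs_le.mp this).2
        linarith
      have hN : euclNorm u ≤ B := by
        rcases eq_or_lt_of_le (euclNorm_nonneg u) with h0 | h0
        · rw [← h0]; exact hB
        · rw [h2] at h3; nlinarith
      rw [h1, h2]
      exact pow_le_pow_left₀ (euclNorm_nonneg u) hN 2
    have hmax : lamMax ((A1 - A2) * (A1 - A2)ᵀ) ≤ B ^ 2 := by
      unfold lamMax
      refine Real.sSup_le ?_ (sq_nonneg B)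
      rintro r ⟨v, hv, rfl⟩
      exact hquad v hv
    unfold opNorm2
    calc Real.sqrt (lamMax ((A1 - A2) * (A1 - A2)ᵀ))
        ≤ Real.sqrt (B ^ 2) := Real.sqrt_le_sqrt hmax
      _ = B := by rw [Real.sqrt_sq hB]
      _ ≤ 2 * n * τ * M ^ 2 * RX ^ 3 := by rw [hBdef]; linarith [hB]
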